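/- In any orientation of a complete bipartite graph, if a vertex d pecks (has an arc to) a vertex k in the other partite set such that k has maximal out-degree among its partite set, then d has a directed path of length at most 3 to every vertex in the other partite set (i.e., d is a 3-Duke). -/
import Mathlib


/-- An orientation of a complete multipartite graph: vertices `V`, partite sets
given as fibers of `part : V → ι`, and `peck` the arc relation. Between any two
vertices in different partite sets there is exactly one arc, and there are no
arcs within a partite set. -/
structure MTour (V : Type*) (ι : Type*) where
  part : V → ι
  peck : V → V → Prop
  complete : ∀ u v, part u ≠ part v → peck u v ∨ peck v u
  inter : ∀ u v, peck u v → part u ≠ part v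
  asymm : ∀ u v, peck u v → ¬ peck v u

namespace MTour

variable {V ι : Type*}

/-- There is a directed path of length at most `m` from `d` to `c`. -/
def hasPath (T : MTour V ι) (m : ℕ) (d c : V) : Prop :=
  ∃ k ≤ m, ∃ f : ℕ → V, f 0 = d ∧ f k = c ∧ ∀ i < k, T.peck (f i) (f (i + 1))

/-- `d` is an `m`-Duke: every vertex in a different partite set is reachable
from `d` by a directed path of length at most `m`. -/
def isDuke (T : MTour V ι) (m : ℕ) (d : V) : Prop :=
  ∀ c, T.part c ≠ T.part d → T.hasPath m d c

/-- `d` is an `m`-King: every other vertex is reachable from `d` by a directed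
path of length at most `m`. -/
def isKing (T : MTour V ι) (m : ℕ) (d : V) : Prop :=
  ∀ c, c ≠ d → T.hasPath m d c

/-- The out-degree of a vertex. -/
noncomputable def outDeg (T : MTour V ι) (v : V) : ℕ :=
  Nat.card {w // T.peck v w}

/-- `e` eclipses `d`: same partite set, `e` pecks everything `d` pecks, and
at least one vertex `d` does not peck. -/
def eclipses (T : MTour V ι) (e d : V) : Prop :=
  T.part e = T.part d ∧ (∀ c, T.peck d c → T.peck e c) ∧ ∃ c, T.peck e c ∧ ¬ T.peck d c

/-- `d` is non-eclipsed: no vertex of its partite set eclipses it. -/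
def nonEclipsed (T : MTour V ι) (d : V) : Prop :=
  ∀ e, ¬ T.eclipses e d

/-- Partite set `i` dominates partite set `j`: some vertex of `i` pecks all of `j`. -/
def Dominates (T : MTour V ι) (i j : ι) : Prop :=
  ∃ v, T.part v = i ∧ ∀ w, T.part w = j → T.peck v w

end MTour

/-- In any bipartite tournament, if `d` pecks a vertex `k` of the other
partite set which has maximal out-degree within its own partite set, then
`d` is a 3-Duke. -/
theorem stmt0 {V : Type*} [Finite V] (T : MTour V Bool) (d k : V)
    (hdk : T.peck d k)
    (hprom : ∀ w, T.part w = T.part k → T.outDeg w ≤ T.outDeg k) :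
    T.isDuke 3 d := by
  intro c hcd
  have hdk' : T.part d ≠ T.part k := T.inter d k hdk
  have hck : T.part c = T.part k := by
    revert hcd hdk'
    cases T.part c <;> cases T.part d <;> cases T.part k <;> simp
  by_cases hdc : T.peck d c
  · exact ⟨1, by norm_num, fun i => if i = 0 then d else c, by simp, by simp,
      by intro i hi; interval_cases i; simpa using hdc⟩
  · have hcd' : T.peck c d := ((T.complete d c (fun h => hcd h.symm)).resolve_left hdc)
    have hx : ∃ x, T.peck k x ∧ T.peck x c := by
      by_contra hno
      push_neg at hno
      -- then c pecks d and every out-neighbor of k, so outDeg c > outDeg k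
      have hinj : Function.Injective (fun o : Option {w // T.peck k w} =>
          (o.elim ⟨d, hcd'⟩ (fun x => ⟨x.1, by
            have hxk : T.part k ≠ T.part x.1 := T.inter k x.1 x.2
            have hxc : T.part x.1 ≠ T.part c := by rw [hck]; exact fun h => hxk h.symm
            exact (T.complete x.1 c hxc).resolve_left (hno x.1 x.2)⟩) : {w // T.peck c w})) := by
        rintro (_|⟨x,hx1⟩) (_|⟨y,hy1⟩) h
        · rfl
        · have hdy : d = y := congrArg Subtype.val h
          exact absurd (hdy.symm ▸ hy1) (T.asymm d k hdk)
        · have hxd : x = d := congrArg Subtype.val h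
          exact absurd (hxd ▸ hx1) (T.asymm d k hdk)
        · have hxy : x = y := congrArg Subtype.val h
          simp only [Option.some.injEq]
          exact Subtype.ext hxy
      have := Nat.card_le_card_of_injective _ hinj
      rw [Finite.card_option] at this
      have := hprom c hck
      unfold MTour.outDeg at this
      omega
    obtain ⟨x, hkx, hxc⟩ := hx
    refine ⟨3, le_refl 3, fun i => match i with | 0 => d | 1 => k | 2 => x | _ => c,
      rfl, rfl, ?_⟩
    intro i hi
    interval_cases i
    · exact hdk
    · exact hkx
    · exact hxc
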